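/- There exists an absolute constant c > 0 such that for every natural number N₀ there exists a finite subset A of the real numbers with |A| ≥ N₀ having the property that for every decomposition of A into disjoint subsets B and C with A = B ∪ C, one has max{E₊(B), E×(C)} ≥ c·|A|^(7/3). -/

import Mathlib

open Finset Combinatorics.Additive Pointwise

private lemma aux_lt {M i i' j j' : ℕ} (hi : i ≤ M) (hi' : 1 ≤ i') (hj : j < j') :
    i * (M + 1) ^ j < i' * (M + 1) ^ j' := by
  calc i * (M + 1) ^ j < (M + 1) * (M + 1) ^ j :=
        mul_lt_mul_of_pos_right (Nat.lt_succ_of_le hi) (pow_pos (Nat.succ_pos M) j)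
    _ = (M + 1) ^ (j + 1) := (pow_succ' _ _).symm
    _ ≤ (M + 1) ^ j' := Nat.pow_le_pow_right (Nat.succ_le_succ (Nat.zero_le M)) hj
    _ ≤ i' * (M + 1) ^ j' := Nat.le_mul_of_pos_left _ hi'

private lemma key_inj {M i i' j j' : ℕ} (hi1 : 1 ≤ i) (hi : i ≤ M) (hi1' : 1 ≤ i')
    (hi' : i' ≤ M) (h : i * (M + 1) ^ j = i' * (M + 1) ^ j') : i = i' ∧ j = j' := by
  rcases lt_trichotomy j j' with hj | rfl | hj
  · exact absurd h (Nat.ne_of_lt (aux_lt hi hi1' hj))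
  · exact ⟨Nat.eq_of_mul_eq_mul_right (pow_pos (Nat.succ_pos M) j) h, rfl⟩
  · exact absurd h.symm (Nat.ne_of_lt (aux_lt hi' hi1 hj))

/-- superadditivity of additive energy over disjoint pieces -/
private lemma sum_addEnergy_le {ι : Type*} (s : Finset ι) (f : ι → Finset ℝ) (B : Finset ℝ)
    (hsub : ∀ j ∈ s, f j ⊆ B)
    (hdisj : ∀ j ∈ s, ∀ k ∈ s, j ≠ k → Disjoint (f j) (f k)) :
    ∑ j ∈ s, E[f j, f j] ≤ E[B, B] := by
  classical
  have h1 : ∀ S : Finset ℝ, E[S, S] = (((S ×ˢ S) ×ˢ S ×ˢ S).filter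
      fun x : (ℝ × ℝ) × ℝ × ℝ => x.1.1 + x.2.1 = x.1.2 + x.2.2).card := fun S => rfl
  set T : ι → Finset ((ℝ × ℝ) × ℝ × ℝ) := fun j => ((f j ×ˢ f j) ×ˢ f j ×ˢ f j).filter
      fun x : (ℝ × ℝ) × ℝ × ℝ => x.1.1 + x.2.1 = x.1.2 + x.2.2 with hT
  have hTd : ∀ j ∈ s, ∀ k ∈ s, j ≠ k → Disjoint (T j) (T k) := by
    intro j hj k hk hjk
    rw [disjoint_left]
    intro x hx hx'
    simp only [hT, mem_filter, mem_product] at hx hx'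
    exact disjoint_left.1 (hdisj j hj k hk hjk) hx.1.1.1 hx'.1.1.1
  calc ∑ j ∈ s, E[f j, f j] = ∑ j ∈ s, (T j).card := by simp only [h1, hT]
    _ = (s.biUnion T).card := (card_biUnion hTd).symm
    _ ≤ E[B, B] := by
        rw [h1 B]
        apply card_le_card
        intro x hx
        simp only [mem_biUnion] at hx
        obtain ⟨j, hj, hx⟩ := hx
        simp only [hT, mem_filter, mem_product] at hx ⊢
        exact ⟨⟨⟨hsub j hj hx.1.1.1, hsub j hj hx.1.1.2⟩,
          hsub j hj hx.1.2.1, hsub j hj hx.1.2.2⟩, hx.2⟩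

private lemma main_construction (K : ℕ) (hK : 1 ≤ K) :
    ∃ A : Finset ℝ, A.card = K ^ 3 ∧ ∀ B C : Finset ℝ, Disjoint B C → B ∪ C = A →
      K ^ 7 ≤ 32 * max E[B, B] Eₘ[C, C] := by
  classical
  set M : ℕ := K ^ 2 with hM
  set F : ℕ × ℕ → ℝ := fun p => ((p.1 * (M + 1) ^ p.2 : ℕ) : ℝ) with hF
  set A : Finset ℝ := ((Icc 1 M) ×ˢ (Icc 1 K)).image F with hA
  have hinj : Set.InjOn F ((Icc 1 M ×ˢ Icc 1 K : Finset (ℕ × ℕ)) : Set (ℕ × ℕ)) := by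
    intro p hp q hq h
    simp only [coe_product, Set.mem_prod, mem_coe, mem_Icc] at hp hq
    have h' : p.1 * (M + 1) ^ p.2 = q.1 * (M + 1) ^ q.2 := Nat.cast_injective h
    obtain ⟨h1, h2⟩ := key_inj hp.1.1 hp.1.2 hq.1.1 hq.1.2 h'
    exact Prod.ext h1 h2
  have hcard : A.card = K ^ 3 := by
    rw [hA, card_image_of_injOn hinj, card_product, Nat.card_Icc, Nat.card_Icc]
    simp [hM]; ring
  -- rows
  set R : ℕ → Finset ℝ := fun j => (Icc 1 M).image (fun i => ((i * (M + 1) ^ j : ℕ) : ℝ))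
    with hR
  have hAR : A = (Icc 1 K).biUnion R := by
    ext x
    simp only [hA, hR, mem_image, mem_product, mem_biUnion, hF, Prod.exists]
    constructor
    · rintro ⟨i, j, ⟨hi, hj⟩, rfl⟩; exact ⟨j, hj, i, hi, rfl⟩
    · rintro ⟨j, hj, i, hi, rfl⟩; exact ⟨i, j, ⟨hi, hj⟩, rfl⟩
  have hRdisj : ∀ j k : ℕ, j ≠ k → Disjoint (R j) (R k) := by
    intro j k hjk
    rw [disjoint_left]
    intro x hx hx'
    simp only [hR, mem_image, mem_Icc] at hx hx'
    obtain ⟨i, ⟨hi1, hi2⟩, rfl⟩ := hx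
    obtain ⟨i', ⟨hi1', hi2'⟩, he⟩ := hx'
    exact hjk ((key_inj hi1' hi2' hi1 hi2 (Nat.cast_injective he)).2).symm
  -- row sumset bound
  have hrow_sum : ∀ j : ℕ, ∀ S : Finset ℝ, S ⊆ R j → (S + S).card ≤ 2 * M := by
    intro j S hS
    have hsub : S + S ⊆ (Icc 2 (2 * M)).image (fun a => ((a * (M + 1) ^ j : ℕ) : ℝ)) := by
      intro x hx
      rw [Finset.mem_add] at hx
      obtain ⟨y, hy, z, hz, rfl⟩ := hx
      obtain ⟨i, hi, rfl⟩ := mem_image.1 (hS hy)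
      obtain ⟨i', hi', rfl⟩ := mem_image.1 (hS hz)
      rw [mem_Icc] at hi hi'
      refine mem_image.2 ⟨i + i', mem_Icc.2 ⟨by omega, by omega⟩, ?_⟩
      push_cast
      ring
    calc (S + S).card ≤ _ := card_le_card hsub
      _ ≤ (Icc 2 (2 * M)).card := card_image_le
      _ ≤ 2 * M := by rw [Nat.card_Icc]; omega
  -- product set bound
  have hAA : (A * A).card ≤ 2 * M ^ 2 * K := by
    have hsub : A * A ⊆ ((Icc 1 (M ^ 2)) ×ˢ (Icc 2 (2 * K))).image F := by
      intro x hx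
      rw [Finset.mem_mul] at hx
      obtain ⟨y, hy, z, hz, rfl⟩ := hx
      obtain ⟨⟨i, j⟩, hij, rfl⟩ := mem_image.1 hy
      obtain ⟨⟨i', j'⟩, hij', rfl⟩ := mem_image.1 hz
      rw [mem_product, mem_Icc, mem_Icc] at hij hij'
      refine mem_image.2 ⟨(i * i', j + j'), ?_, ?_⟩
      · rw [mem_product, mem_Icc, mem_Icc]
        refine ⟨⟨Nat.one_le_iff_ne_zero.2 (Nat.mul_ne_zero (by omega) (by omega)), ?_⟩, by omega, by omega⟩
        calc i * i' ≤ M * M := Nat.mul_le_mul hij.1.2 hij'.1.2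
          _ = M ^ 2 := (sq M).symm
      · simp only [hF]
        push_cast
        ring
    calc (A * A).card ≤ _ := card_le_card hsub
      _ ≤ ((Icc 1 (M ^ 2)) ×ˢ (Icc 2 (2 * K))).card := card_image_le
      _ ≤ 2 * M ^ 2 * K := by
          rw [card_product, Nat.card_Icc, Nat.card_Icc]
          have h1 : M ^ 2 + 1 - 1 = M ^ 2 := by omega
          have h2 : 2 * K + 1 - 2 ≤ 2 * K := by omega
          rw [h1]
          calc M ^ 2 * (2 * K + 1 - 2) ≤ M ^ 2 * (2 * K) := Nat.mul_le_mul_left _ h2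
            _ = 2 * M ^ 2 * K := by ring
  refine ⟨A, hcard, ?_⟩
  intro B C hBC hUnion
  have hBsub : B ⊆ A := hUnion ▸ subset_union_left
  have hCsub : C ⊆ A := hUnion ▸ subset_union_right
  have hsumcard : B.card + C.card = K ^ 3 := by
    rw [← hcard, ← hUnion, card_union_of_disjoint hBC]
  rcases le_or_gt (K ^ 3) (2 * B.card) with hB | hB
  · -- additive case
    have key : K ^ 7 ≤ 32 * E[B, B] := by
      set b : ℕ → ℕ := fun j => (B ∩ R j).card with hb
      have hBdecomp : ∑ j ∈ Icc 1 K, b j = B.card := by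
        rw [← card_biUnion (fun j hj k hk hjk =>
          disjoint_left.2 fun x hx hx' => disjoint_left.1 (hRdisj j k hjk)
            (mem_inter.1 hx).2 (mem_inter.1 hx').2)]
        congr 1
        ext x
        simp only [mem_biUnion, mem_inter]
        constructor
        · rintro ⟨j, hj, hx, _⟩; exact hx
        · intro hx
          have := hBsub hx
          rw [hAR, mem_biUnion] at this
          obtain ⟨j, hj, hxj⟩ := this
          exact ⟨j, hj, hx, hxj⟩
      have hrowE : ∀ j, b j ^ 4 ≤ 2 * M * E[B ∩ R j, B ∩ R j] := by
        intro j
        have h1 := le_card_add_mul_addEnergy (B ∩ R j) (B ∩ R j)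
        have h2 : (B ∩ R j + (B ∩ R j)).card ≤ 2 * M :=
          hrow_sum j _ inter_subset_right
        calc b j ^ 4 = b j ^ 2 * b j ^ 2 := by ring
          _ ≤ (B ∩ R j + (B ∩ R j)).card * E[B ∩ R j, B ∩ R j] := h1
          _ ≤ 2 * M * E[B ∩ R j, B ∩ R j] := Nat.mul_le_mul_right _ h2
      have hsumE : ∑ j ∈ Icc 1 K, E[B ∩ R j, B ∩ R j] ≤ E[B, B] :=
        sum_addEnergy_le _ _ _ (fun j _ => inter_subset_left)
          (fun j _ k _ hjk => disjoint_left.2 fun x hx hx' =>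
            disjoint_left.1 (hRdisj j k hjk) (mem_inter.1 hx).2 (mem_inter.1 hx').2)
      have hCS1 : (∑ j ∈ Icc 1 K, b j) ^ 2 ≤ K * ∑ j ∈ Icc 1 K, b j ^ 2 := by
        have := sum_mul_sq_le_sq_mul_sq (R := ℕ) (Icc 1 K) b 1
        simpa [Nat.card_Icc, mul_comm] using this
      have hCS2 : (∑ j ∈ Icc 1 K, b j ^ 2) ^ 2 ≤ K * ∑ j ∈ Icc 1 K, b j ^ 4 := by
        have := sum_mul_sq_le_sq_mul_sq (R := ℕ) (Icc 1 K) (fun j => b j ^ 2) 1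
        simpa [Nat.card_Icc, mul_comm, ← pow_mul] using this
      have hchain : B.card ^ 4 ≤ K ^ 3 * (2 * M * E[B, B]) := by
        calc B.card ^ 4 = ((∑ j ∈ Icc 1 K, b j) ^ 2) ^ 2 := by rw [hBdecomp]; ring
          _ ≤ (K * ∑ j ∈ Icc 1 K, b j ^ 2) ^ 2 := Nat.pow_le_pow_left hCS1 2
          _ = K ^ 2 * (∑ j ∈ Icc 1 K, b j ^ 2) ^ 2 := by ring
          _ ≤ K ^ 2 * (K * ∑ j ∈ Icc 1 K, b j ^ 4) := Nat.mul_le_mul_left _ hCS2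
          _ = K ^ 3 * ∑ j ∈ Icc 1 K, b j ^ 4 := by ring
          _ ≤ K ^ 3 * ∑ j ∈ Icc 1 K, 2 * M * E[B ∩ R j, B ∩ R j] :=
              Nat.mul_le_mul_left _ (Finset.sum_le_sum fun j _ => hrowE j)
          _ = K ^ 3 * (2 * M * ∑ j ∈ Icc 1 K, E[B ∩ R j, B ∩ R j]) := by
              rw [← Finset.mul_sum]
          _ ≤ K ^ 3 * (2 * M * E[B, B]) :=
              Nat.mul_le_mul_left _ (Nat.mul_le_mul_left _ hsumE)
      have h12 : K ^ 12 ≤ 32 * K ^ 5 * E[B, B] := by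
        calc K ^ 12 = (K ^ 3) ^ 4 := by ring
          _ ≤ (2 * B.card) ^ 4 := Nat.pow_le_pow_left hB 4
          _ = 16 * B.card ^ 4 := by ring
          _ ≤ 16 * (K ^ 3 * (2 * M * E[B, B])) := Nat.mul_le_mul_left _ hchain
          _ = 32 * K ^ 5 * E[B, B] := by rw [hM]; ring
      refine Nat.le_of_mul_le_mul_left ?_ (show 0 < K ^ 5 by positivity)
      calc K ^ 5 * K ^ 7 = K ^ 12 := by ring
        _ ≤ 32 * K ^ 5 * E[B, B] := h12
        _ = K ^ 5 * (32 * E[B, B]) := by ring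
    exact key.trans (Nat.mul_le_mul_left _ (le_max_left _ _))
  · -- multiplicative case
    have hC : K ^ 3 ≤ 2 * C.card := by omega
    have key : K ^ 7 ≤ 32 * Eₘ[C, C] := by
      have h1 := le_card_mul_mul_mulEnergy C C
      have h2 : (C * C).card ≤ 2 * K ^ 5 := by
        calc (C * C).card ≤ (A * A).card :=
              card_le_card (mul_subset_mul hCsub hCsub)
          _ ≤ 2 * M ^ 2 * K := hAA
          _ = 2 * K ^ 5 := by rw [hM]; ring
      have hchain : C.card ^ 4 ≤ 2 * K ^ 5 * Eₘ[C, C] := by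
        calc C.card ^ 4 = C.card ^ 2 * C.card ^ 2 := by ring
          _ ≤ (C * C).card * Eₘ[C, C] := h1
          _ ≤ 2 * K ^ 5 * Eₘ[C, C] := Nat.mul_le_mul_right _ h2
      have h12 : K ^ 12 ≤ 32 * K ^ 5 * Eₘ[C, C] := by
        calc K ^ 12 = (K ^ 3) ^ 4 := by ring
          _ ≤ (2 * C.card) ^ 4 := Nat.pow_le_pow_left hC 4
          _ = 16 * C.card ^ 4 := by ring
          _ ≤ 16 * (2 * K ^ 5 * Eₘ[C, C]) := Nat.mul_le_mul_left _ hchain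
          _ = 32 * K ^ 5 * Eₘ[C, C] := by ring
      refine Nat.le_of_mul_le_mul_left ?_ (show 0 < K ^ 5 by positivity)
      calc K ^ 5 * K ^ 7 = K ^ 12 := by ring
        _ ≤ 32 * K ^ 5 * Eₘ[C, C] := h12
        _ = K ^ 5 * (32 * Eₘ[C, C]) := by ring
    exact key.trans (Nat.mul_le_mul_left _ (le_max_right _ _))

/-- Theorem 1.2 (lower bound part): there exist arbitrarily large finite sets `A ⊆ ℝ`
such that every decomposition `A = B ∪ C` into disjoint parts satisfies
`max{E₊(B), E×(C)} ≥ c·|A|^(7/3)`. -/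
theorem low_energy_decomposition_lower_bound :
    ∃ c : ℝ, 0 < c ∧ ∀ N₀ : ℕ, ∃ A : Finset ℝ, N₀ ≤ A.card ∧
      ∀ B C : Finset ℝ, Disjoint B C → B ∪ C = A →
        c * (A.card : ℝ) ^ ((7 : ℝ) / 3) ≤ (max E[B, B] Eₘ[C, C] : ℝ) := by
  refine ⟨1 / 32, by norm_num, ?_⟩
  intro N₀
  set K : ℕ := max 1 N₀ with hK
  have hK1 : 1 ≤ K := le_max_left 1 N₀
  have hK2 : N₀ ≤ K := le_max_right 1 N₀
  clear_value K
  obtain ⟨A, hcard, hmain⟩ := main_construction K hK1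
  refine ⟨A, ?_, ?_⟩
  · rw [hcard]
    exact hK2.trans (Nat.le_self_pow (by norm_num) K)
  · intro B C h1 h2
    have h := hmain B C h1 h2
    have hcast : ((A.card : ℕ) : ℝ) ^ ((7 : ℝ) / 3) = (K : ℝ) ^ (7 : ℕ) := by
      rw [hcard]
      push_cast
      rw [← Real.rpow_natCast ((K : ℝ)) 3, ← Real.rpow_mul (Nat.cast_nonneg K),
        ← Real.rpow_natCast ((K : ℝ)) 7]
      norm_num
    rw [hcast]
    have h' : ((K : ℝ)) ^ (7 : ℕ) ≤ 32 * max ((E[B, B] : ℕ) : ℝ) ((Eₘ[C, C] : ℕ) : ℝ) := by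
      exact_mod_cast h
    linarith
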